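/- Suppose x₀,₀ ∈ ℝⁿ satisfies F(x₀,₀) ≤ 0 entrywise, 0 ≤ x₀,₀ entrywise, and eᵀx₀,₀ ≤ 1. Then all iterates x_{i,s} of the modified Newton algorithm are well defined (each matrix F'_{x_{i,0}} is invertible), and every iterate x_{i,s} satisfies F(x_{i,s}) ≤ 0 entrywise, 0 ≤ x_{i,s} entrywise, eᵀx_{i,s} ≤ 1, and x_{i,s−1} ≤ x_{i,s} entrywise for all i ≥ 0 and 1 ≤ s ≤ n_i; in particular the outer sequence x_k := x_{k,0} is entrywise monotonically increasing. -/

import Mathlib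

open Matrix BigOperators Finset Filter

noncomputable section

/-- Kronecker product of two vectors: `(u ⊗ w)_{(i,j)} = u_i w_j`. -/
def kron {n : ℕ} (u w : Fin n → ℝ) : Fin n × Fin n → ℝ := fun p => u p.1 * w p.2

/-- `u ⊗ I` : the `n² × n` Kronecker product of a vector with the identity,
so that `(u ⊗ I) w = u ⊗ w`. -/
def kronVecId {n : ℕ} (u : Fin n → ℝ) : Matrix (Fin n × Fin n) (Fin n) ℝ :=
  Matrix.of fun p k => u p.1 * (if p.2 = k then (1 : ℝ) else 0)

/-- `I ⊗ u` : the `n² × n` Kronecker product of the identity with a vector,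
so that `(I ⊗ u) w = w ⊗ u`. -/
def idKronVec {n : ℕ} (u : Fin n → ℝ) : Matrix (Fin n × Fin n) (Fin n) ℝ :=
  Matrix.of fun p k => (if p.1 = k then (1 : ℝ) else 0) * u p.2

/-- `F(x) = x − α R (x ⊗ x) − (1 − α) v`. -/
def Fmap {n : ℕ} (α : ℝ) (R : Matrix (Fin n) (Fin n × Fin n) ℝ) (v : Fin n → ℝ)
    (x : Fin n → ℝ) : Fin n → ℝ :=
  x - α • R.mulVec (kron x x) - (1 - α) • v

/-- `F'ₓ = I − α R (x ⊗ I + I ⊗ x)`. -/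
def Fprime {n : ℕ} (α : ℝ) (R : Matrix (Fin n) (Fin n × Fin n) ℝ)
    (x : Fin n → ℝ) : Matrix (Fin n) (Fin n) ℝ :=
  1 - α • (R * (kronVecId x + idKronVec x))

/-- One step of the modified Newton iteration with the derivative frozen at `b`. -/
def mnStep {n : ℕ} (α : ℝ) (R : Matrix (Fin n) (Fin n × Fin n) ℝ) (v : Fin n → ℝ)
    (b : Fin n → ℝ) (w : Fin n → ℝ) : Fin n → ℝ :=
  w - (Fprime α R b)⁻¹.mulVec (Fmap α R v w)

/-- The outer sequence of the modified Newton algorithm: `mnOuter … i = x_{i,0}`,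
where `x_{i+1,0} = x_{i,nᵢ}` is obtained by applying `nᵢ` frozen Newton steps to `x_{i,0}`. -/
def mnOuter {n : ℕ} (α : ℝ) (R : Matrix (Fin n) (Fin n × Fin n) ℝ) (v : Fin n → ℝ)
    (ni : ℕ → ℕ) (x0 : Fin n → ℝ) : ℕ → (Fin n → ℝ)
  | 0 => x0
  | (i + 1) => (mnStep α R v (mnOuter α R v ni x0 i))^[ni i] (mnOuter α R v ni x0 i)

/-- The inner iterates of the modified Newton algorithm: `mnIter … i s = x_{i,s}`. -/
def mnIter {n : ℕ} (α : ℝ) (R : Matrix (Fin n) (Fin n × Fin n) ℝ) (v : Fin n → ℝ)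
    (ni : ℕ → ℕ) (x0 : Fin n → ℝ) (i s : ℕ) : Fin n → ℝ :=
  (mnStep α R v (mnOuter α R v ni x0 i))^[s] (mnOuter α R v ni x0 i)

noncomputable section

lemma unit_one_sub {n : ℕ} (M : Matrix (Fin n) (Fin n) ℝ) (hM : ∀ i j, 0 ≤ M i j)
    {c : ℝ} (hc1 : c < 1) (hcol : ∀ j, ∑ i, M i j ≤ c) :
    IsUnit (1 - M).det := by
  rw [isUnit_iff_ne_zero]
  intro hdet
  obtain ⟨w, hw0, hw⟩ := (Matrix.exists_mulVec_eq_zero_iff).2 hdet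
  have hwM : ∀ i, w i = ∑ j, M i j * w j := by
    intro i
    have h := congrFun hw i
    simp only [Matrix.sub_mulVec, Matrix.one_mulVec, Pi.sub_apply, Pi.zero_apply,
      sub_eq_zero] at h
    simpa [Matrix.mulVec, dotProduct] using h
  set S := ∑ i, |w i| with hS
  have hSpos : 0 < S := by
    obtain ⟨i, hi⟩ := Function.ne_iff.mp hw0
    have : 0 < |w i| := abs_pos.mpr hi
    refine lt_of_lt_of_le this ?_
    rw [hS]
    exact Finset.single_le_sum (f := fun i => |w i|) (fun j _ => abs_nonneg _) (mem_univ i)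
  have hle : S ≤ c * S := by
    calc S = ∑ i, |∑ j, M i j * w j| := by rw [hS]; exact Finset.sum_congr rfl fun i _ => by rw [← hwM i]
    _ ≤ ∑ i, ∑ j, M i j * |w j| := by
        refine Finset.sum_le_sum fun i _ => ?_
        refine le_trans (Finset.abs_sum_le_sum_abs _ _) (Finset.sum_le_sum fun j _ => ?_)
        rw [abs_mul, abs_of_nonneg (hM i j)]
    _ = ∑ j, (∑ i, M i j) * |w j| := by rw [Finset.sum_comm]; simp [Finset.sum_mul]
    _ ≤ ∑ j, c * |w j| := Finset.sum_le_sum fun j _ => mul_le_mul_of_nonneg_right (hcol j) (abs_nonneg _)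
    _ = c * S := by rw [← Finset.mul_sum]
  nlinarith

lemma pow_nonneg_colsum {n : ℕ} (M : Matrix (Fin n) (Fin n) ℝ) (hM : ∀ i j, 0 ≤ M i j)
    {c : ℝ} (hc0 : 0 ≤ c) (hcol : ∀ j, ∑ i, M i j ≤ c) (K : ℕ) :
    (∀ i j, 0 ≤ (M ^ K) i j) ∧ (∀ j, ∑ i, (M ^ K) i j ≤ c ^ K) := by
  induction K with
  | zero =>
    constructor
    · intro i j; simp [Matrix.one_apply]; split <;> norm_num
    · intro j; simp [Matrix.one_apply]
  | succ K ih =>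
    have hmul : M ^ (K + 1) = M * M ^ K := pow_succ' M K
    constructor
    · intro i j
      rw [hmul, Matrix.mul_apply]
      exact Finset.sum_nonneg fun l _ => mul_nonneg (hM i l) (ih.1 l j)
    · intro j
      rw [hmul]
      have : ∑ i, (M * M ^ K) i j = ∑ l, (∑ i, M i l) * (M ^ K) l j := by
        simp only [Matrix.mul_apply]
        rw [Finset.sum_comm]; simp [Finset.sum_mul]
      rw [this, pow_succ']
      calc ∑ l, (∑ i, M i l) * (M ^ K) l j ≤ ∑ l, c * (M ^ K) l j :=
            Finset.sum_le_sum fun l _ => mul_le_mul_of_nonneg_right (hcol l) (ih.1 l j)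
      _ = c * ∑ l, (M ^ K) l j := by rw [← Finset.mul_sum]
      _ ≤ c * c ^ K := mul_le_mul_of_nonneg_left (ih.2 j) hc0

lemma inv_one_sub_nonneg {n : ℕ} (M : Matrix (Fin n) (Fin n) ℝ) (hM : ∀ i j, 0 ≤ M i j)
    {c : ℝ} (hc0 : 0 ≤ c) (hc1 : c < 1) (hcol : ∀ j, ∑ i, M i j ≤ c) :
    ∀ i j, 0 ≤ (1 - M)⁻¹ i j := by
  intro i j
  have hu : IsUnit (1 - M).det := unit_one_sub M hM hc1 hcol
  have key : ∀ K : ℕ, (1 - M)⁻¹ = (∑ k ∈ Finset.range K, M ^ k) + (1 - M)⁻¹ * M ^ K := by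
    intro K
    have h1 : (1 - M) * (∑ k ∈ Finset.range K, M ^ k) = 1 - M ^ K := mul_neg_geom_sum M K
    have h2 := congrArg (fun B => (1 - M)⁻¹ * B) h1
    simp only [← Matrix.mul_assoc, Matrix.nonsing_inv_mul _ hu, Matrix.one_mul,
      Matrix.mul_sub, Matrix.mul_one] at h2
    rw [h2]; abel
  set C := ∑ l, |(1 - M)⁻¹ i l| with hC
  have hbound : ∀ K : ℕ, -(C * c ^ K) ≤ (1 - M)⁻¹ i j := by
    intro K
    have hp := pow_nonneg_colsum M hM hc0 hcol K
    have hentry : ∀ l, (M ^ K) l j ≤ c ^ K := fun l =>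
      le_trans (Finset.single_le_sum (fun m _ => hp.1 m j) (mem_univ l)) (hp.2 j)
    have h3 := congrFun (congrFun (key K) i) j
    simp only [Matrix.add_apply, Matrix.mul_apply] at h3
    have hS : 0 ≤ (∑ k ∈ Finset.range K, M ^ k) i j := by
      rw [Matrix.sum_apply]
      exact Finset.sum_nonneg fun k _ => (pow_nonneg_colsum M hM hc0 hcol k).1 i j
    have herr : -(C * c ^ K) ≤ ∑ l, (1 - M)⁻¹ i l * (M ^ K) l j := by
      rw [hC, Finset.sum_mul, ← Finset.sum_neg_distrib]
      refine Finset.sum_le_sum fun l _ => ?_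
      have h4 : -(|(1 - M)⁻¹ i l| * c ^ K) ≤ (1 - M)⁻¹ i l * (M ^ K) l j := by
        have := neg_abs_le ((1 - M)⁻¹ i l)
        nlinarith [abs_nonneg ((1 - M)⁻¹ i l), hp.1 l j, hentry l, pow_nonneg hc0 K,
          neg_abs_le ((1 - M)⁻¹ i l), le_abs_self ((1 - M)⁻¹ i l)]
      linarith
    rw [h3]
    have : (0:ℝ) ≤ (∑ k ∈ Finset.range K, (M ^ k)) i j := hS
    linarith
  have htend : Tendsto (fun K : ℕ => -(C * c ^ K)) atTop (nhds 0) := by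
    have := (tendsto_pow_atTop_nhds_zero_of_lt_one hc0 hc1).const_mul C
    simpa using this.neg
  exact le_of_tendsto' htend hbound

section Algebra
variable {n : ℕ} (α : ℝ) (R : Matrix (Fin n) (Fin n × Fin n) ℝ) (v : Fin n → ℝ)

lemma kronVecId_mulVec (u w : Fin n → ℝ) : (kronVecId u) *ᵥ w = kron u w := by
  funext p
  simp [kronVecId, Matrix.mulVec, dotProduct, kron, mul_ite, ite_mul, mul_assoc]

lemma idKronVec_mulVec (u w : Fin n → ℝ) : (idKronVec u) *ᵥ w = kron w u := by
  funext p
  simp [idKronVec, Matrix.mulVec, dotProduct, kron, mul_ite, ite_mul, mul_comm]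

lemma Fprime_mulVec (x d : Fin n → ℝ) :
    (Fprime α R x) *ᵥ d = d - α • (R *ᵥ (kron x d + kron d x)) := by
  rw [Fprime, Matrix.sub_mulVec, Matrix.one_mulVec, Matrix.smul_mulVec,
    ← Matrix.mulVec_mulVec, Matrix.add_mulVec, kronVecId_mulVec, idKronVec_mulVec]

lemma Fmap_add (x d : Fin n → ℝ) :
    Fmap α R v (x + d) =
      Fmap α R v x + (Fprime α R x) *ᵥ d - α • (R *ᵥ (kron d d)) := by
  have hk : kron (x + d) (x + d) = kron x x + (kron x d + kron d x) + kron d d := by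
    funext p; simp [kron]; ring
  rw [Fmap, hk, Fprime_mulVec, Fmap]
  funext i
  simp [Matrix.mulVec_add, smul_add]
  ring

lemma Fprime_sub (x b : Fin n → ℝ) :
    Fprime α R x - Fprime α R b
      = -(α • (R * (kronVecId (x - b) + idKronVec (x - b)))) := by
  have h1 : kronVecId (x - b) = kronVecId x - kronVecId b := by
    funext p k; simp only [kronVecId, Matrix.of_apply, Matrix.sub_apply, Pi.sub_apply]
    split <;> ring
  have h2 : idKronVec (x - b) = idKronVec x - idKronVec b := by
    funext p k; simp only [idKronVec, Matrix.of_apply, Matrix.sub_apply, Pi.sub_apply]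
    split <;> ring
  rw [Fprime, Fprime, h1, h2]
  rw [show (kronVecId x - kronVecId b) + (idKronVec x - idKronVec b)
      = (kronVecId x + idKronVec x) - (kronVecId b + idKronVec b) by abel]
  rw [Matrix.mul_sub, smul_sub]
  abel

lemma sum_mulVec_col (A : Matrix (Fin n) (Fin n × Fin n) ℝ) (y : Fin n × Fin n → ℝ) :
    ∑ i, (A *ᵥ y) i = ∑ p, (∑ i, A i p) * y p := by
  simp only [Matrix.mulVec, dotProduct]
  rw [Finset.sum_comm]
  simp [Finset.sum_mul]

lemma sum_kron (x y : Fin n → ℝ) :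
    ∑ p, kron x y p = (∑ i, x i) * (∑ j, y j) := by
  rw [Fintype.sum_prod_type]
  simp [kron, ← Finset.sum_mul, ← Finset.mul_sum]

lemma sum_Fmap (hRcol : ∀ p, ∑ i, R i p = 1) (hv1 : ∑ i, v i = 1) (x : Fin n → ℝ) :
    ∑ i, Fmap α R v x i = (∑ i, x i) - α * (∑ i, x i) ^ 2 - (1 - α) := by
  simp only [Fmap, Pi.sub_apply, Pi.smul_apply, smul_eq_mul]
  rw [Finset.sum_sub_distrib, Finset.sum_sub_distrib, ← Finset.mul_sum, ← Finset.mul_sum,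
    sum_mulVec_col, hv1]
  have : ∑ p, (∑ i, R i p) * kron x x p = (∑ i, x i) ^ 2 := by
    simp only [hRcol, one_mul]
    rw [sum_kron]; ring
  rw [this]
  ring

lemma sum_Fprime_mulVec (hRcol : ∀ p, ∑ i, R i p = 1) (b d : Fin n → ℝ) :
    ∑ i, ((Fprime α R b) *ᵥ d) i
      = (∑ i, d i) - 2 * α * (∑ i, b i) * (∑ i, d i) := by
  rw [Fprime_mulVec]
  simp only [Pi.sub_apply, Pi.smul_apply, smul_eq_mul]
  rw [Finset.sum_sub_distrib, ← Finset.mul_sum, sum_mulVec_col]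
  simp only [hRcol, one_mul]
  have : ∑ p, (kron b d + kron d b) p = ∑ p, kron b d p + ∑ p, kron d b p := by
    simp [Finset.sum_add_distrib]
  rw [this, sum_kron, sum_kron]
  ring

end Algebra

section Step
variable {n : ℕ} {α : ℝ} {R : Matrix (Fin n) (Fin n × Fin n) ℝ} {v : Fin n → ℝ}

lemma Kmat_nonneg {b : Fin n → ℝ} (hb0 : 0 ≤ b) :
    ∀ p k, 0 ≤ (kronVecId b + idKronVec b) p k := by
  intro p k
  have h1 : (0:ℝ) ≤ if p.2 = k then (1:ℝ) else 0 := by split <;> norm_num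
  have h2 : (0:ℝ) ≤ if p.1 = k then (1:ℝ) else 0 := by split <;> norm_num
  exact add_nonneg (mul_nonneg (hb0 p.1) h1) (mul_nonneg h2 (hb0 p.2))

lemma sum_K_col (b : Fin n → ℝ) (k : Fin n) :
    ∑ p, (kronVecId b + idKronVec b) p k = 2 * ∑ i, b i := by
  rw [Fintype.sum_prod_type]
  simp [kronVecId, idKronVec, Finset.sum_add_distrib, mul_ite, ite_mul, mul_comm]
  ring

lemma step_lemma (hα0 : 0 < α) (hα : α < 1/2)
    (hR0 : ∀ i p, 0 ≤ R i p) (hRcol : ∀ p, ∑ i, R i p = 1) (hv1 : ∑ i, v i = 1)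
    {b x : Fin n → ℝ} (hb0 : 0 ≤ b) (hb1 : ∑ i, b i ≤ 1)
    (hbx : b ≤ x) (hx1 : ∑ i, x i ≤ 1) (hFx : Fmap α R v x ≤ 0) :
    x ≤ mnStep α R v b x ∧ Fmap α R v (mnStep α R v b x) ≤ 0 ∧
      ∑ i, mnStep α R v b x i ≤ 1 := by
  set M := α • (R * (kronVecId b + idKronVec b)) with hMdef
  have hFprime : Fprime α R b = 1 - M := rfl
  have hM0 : ∀ i j, 0 ≤ M i j := by
    intro i j
    rw [hMdef]
    simp only [Matrix.smul_apply, Matrix.mul_apply, smul_eq_mul]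
    exact mul_nonneg hα0.le
      (Finset.sum_nonneg fun p _ => mul_nonneg (hR0 i p) (Kmat_nonneg hb0 p j))
  have hc0 : (0:ℝ) ≤ 2 * α := by linarith
  have hc1 : 2 * α < 1 := by linarith
  have hcol : ∀ j, ∑ i, M i j ≤ 2 * α := by
    intro j
    have h1 : ∑ i, M i j = α * ∑ p, (∑ i, R i p) * (kronVecId b + idKronVec b) p j := by
      rw [hMdef]
      simp only [Matrix.smul_apply, Matrix.mul_apply, smul_eq_mul]
      rw [← Finset.mul_sum, Finset.sum_comm]
      simp [Finset.sum_mul]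
    rw [h1]
    simp only [hRcol, one_mul]
    rw [sum_K_col]
    have hb0' : 0 ≤ ∑ i, b i := Finset.sum_nonneg fun i _ => hb0 i
    nlinarith
  have hdet : IsUnit (Fprime α R b).det := by
    rw [hFprime]; exact unit_one_sub M hM0 hc1 hcol
  have hinv : ∀ i j, 0 ≤ (Fprime α R b)⁻¹ i j := by
    rw [hFprime]; exact inv_one_sub_nonneg M hM0 hc0 hc1 hcol
  set d : Fin n → ℝ := -((Fprime α R b)⁻¹ *ᵥ (Fmap α R v x)) with hd
  have hstep : mnStep α R v b x = x + d := by
    rw [mnStep, hd, sub_eq_add_neg]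
  have hd0 : 0 ≤ d := by
    intro i
    rw [hd]
    simp only [Pi.neg_apply, Matrix.mulVec, dotProduct, Pi.zero_apply]
    rw [neg_nonneg]
    exact Finset.sum_nonpos fun j _ => mul_nonpos_of_nonneg_of_nonpos (hinv i j) (hFx j)
  have hAd : (Fprime α R b) *ᵥ d = -(Fmap α R v x) := by
    rw [hd, Matrix.mulVec_neg, Matrix.mulVec_mulVec, Matrix.mul_nonsing_inv _ hdet,
      Matrix.one_mulVec]
  have hxx : x ≤ mnStep α R v b x := by
    rw [hstep]; intro i
    exact le_add_of_nonneg_right (hd0 i)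
  have hEq : Fmap α R v (x + d)
      = (-(α • (R * (kronVecId (x - b) + idKronVec (x - b))))) *ᵥ d
        - α • (R *ᵥ kron d d) := by
    have h5 : (Fprime α R x) *ᵥ d
        = (Fprime α R x - Fprime α R b) *ᵥ d + -(Fmap α R v x) := by
      rw [Matrix.sub_mulVec, hAd]; abel
    rw [Fmap_add, h5, Fprime_sub]
    abel
  have hxb0 : 0 ≤ x - b := fun i => sub_nonneg.2 (hbx i)
  have hF' : Fmap α R v (mnStep α R v b x) ≤ 0 := by
    rw [hstep, hEq]
    intro i
    rw [Matrix.neg_mulVec, Matrix.smul_mulVec]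
    simp only [Pi.sub_apply, Pi.neg_apply, Pi.smul_apply, smul_eq_mul, Pi.zero_apply]
    have h6 : 0 ≤ ((R * (kronVecId (x - b) + idKronVec (x - b))) *ᵥ d) i := by
      simp only [Matrix.mulVec, dotProduct, Matrix.mul_apply]
      refine Finset.sum_nonneg fun k _ => mul_nonneg ?_ (hd0 k)
      exact Finset.sum_nonneg fun p _ => mul_nonneg (hR0 i p) (Kmat_nonneg hxb0 p k)
    have h7 : 0 ≤ (R *ᵥ kron d d) i := by
      simp only [Matrix.mulVec, dotProduct]
      exact Finset.sum_nonneg fun p _ => mul_nonneg (hR0 i p) (mul_nonneg (hd0 p.1) (hd0 p.2))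
    nlinarith
  refine ⟨hxx, hF', ?_⟩
  have h1 : ∑ i, ((Fprime α R b) *ᵥ d) i
      = (∑ i, d i) - 2 * α * (∑ i, b i) * (∑ i, d i) := sum_Fprime_mulVec α R hRcol b d
  have h2 : ∑ i, ((Fprime α R b) *ᵥ d) i
      = -((∑ i, x i) - α * (∑ i, x i) ^ 2 - (1 - α)) := by
    rw [hAd]
    have : ∑ i, (-(Fmap α R v x)) i = -(∑ i, Fmap α R v x i) := by simp
    rw [this, sum_Fmap α R v hRcol hv1]
  set t := ∑ i, x i
  set β := ∑ i, b i
  set s := ∑ i, d i with hsdef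
  have h3 : s - 2 * α * β * s = -(t - α * t ^ 2 - (1 - α)) := by rw [← h1, h2]
  have hβ0 : 0 ≤ β := Finset.sum_nonneg fun i _ => hb0 i
  have hβt : β ≤ t := Finset.sum_le_sum fun i _ => hbx i
  have hsum : ∑ i, mnStep α R v b x i = t + s := by
    rw [hstep]
    simp [Finset.sum_add_distrib]; rfl
  rw [hsum]
  have hden : 0 < 1 - 2 * α * β := by nlinarith
  nlinarith [mul_nonneg (mul_nonneg hα0.le (sub_nonneg.2 hx1))
    (by linarith : (0:ℝ) ≤ 1 + t - 2 * β)]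

end Step

section Main
variable {n : ℕ} {α : ℝ} {R : Matrix (Fin n) (Fin n × Fin n) ℝ} {v : Fin n → ℝ}

lemma Fprime_isUnit (hα0 : 0 < α) (hα : α < 1/2)
    (hR0 : ∀ i p, 0 ≤ R i p) (hRcol : ∀ p, ∑ i, R i p = 1)
    {b : Fin n → ℝ} (hb0 : 0 ≤ b) (hb1 : ∑ i, b i ≤ 1) :
    IsUnit (Fprime α R b) := by
  set M := α • (R * (kronVecId b + idKronVec b)) with hMdef
  have hFprime : Fprime α R b = 1 - M := rfl
  have hM0 : ∀ i j, 0 ≤ M i j := by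
    intro i j
    rw [hMdef]
    simp only [Matrix.smul_apply, Matrix.mul_apply, smul_eq_mul]
    exact mul_nonneg hα0.le
      (Finset.sum_nonneg fun p _ => mul_nonneg (hR0 i p) (Kmat_nonneg hb0 p j))
  have hc1 : 2 * α < 1 := by linarith
  have hcol : ∀ j, ∑ i, M i j ≤ 2 * α := by
    intro j
    have h1 : ∑ i, M i j = α * ∑ p, (∑ i, R i p) * (kronVecId b + idKronVec b) p j := by
      rw [hMdef]
      simp only [Matrix.smul_apply, Matrix.mul_apply, smul_eq_mul]
      rw [← Finset.mul_sum, Finset.sum_comm]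
      simp [Finset.sum_mul]
    rw [h1]
    simp only [hRcol, one_mul]
    rw [sum_K_col]
    have hb0' : 0 ≤ ∑ i, b i := Finset.sum_nonneg fun i _ => hb0 i
    nlinarith
  rw [Matrix.isUnit_iff_isUnit_det, hFprime]
  exact unit_one_sub M hM0 hc1 hcol

lemma inner_inv (hα0 : 0 < α) (hα : α < 1/2)
    (hR0 : ∀ i p, 0 ≤ R i p) (hRcol : ∀ p, ∑ i, R i p = 1) (hv1 : ∑ i, v i = 1)
    {b : Fin n → ℝ} (hb0 : 0 ≤ b) (hb1 : ∑ i, b i ≤ 1) (hFb : Fmap α R v b ≤ 0) :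
    ∀ s, b ≤ (mnStep α R v b)^[s] b ∧ Fmap α R v ((mnStep α R v b)^[s] b) ≤ 0 ∧
      ∑ i, ((mnStep α R v b)^[s] b) i ≤ 1 := by
  intro s
  induction s with
  | zero => exact ⟨le_refl b, by simpa using hFb, by simpa using hb1⟩
  | succ s ih =>
    obtain ⟨hbx, hFx, hx1⟩ := ih
    have hstep := step_lemma hα0 hα hR0 hRcol hv1 hb0 hb1 hbx hx1 hFx
    have hx : (mnStep α R v b)^[s+1] b = mnStep α R v b ((mnStep α R v b)^[s] b) :=
      Function.iterate_succ_apply' _ _ _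
    rw [hx]
    exact ⟨le_trans hbx hstep.1, hstep.2.1, hstep.2.2⟩

lemma inner_mono (hα0 : 0 < α) (hα : α < 1/2)
    (hR0 : ∀ i p, 0 ≤ R i p) (hRcol : ∀ p, ∑ i, R i p = 1) (hv1 : ∑ i, v i = 1)
    {b : Fin n → ℝ} (hb0 : 0 ≤ b) (hb1 : ∑ i, b i ≤ 1) (hFb : Fmap α R v b ≤ 0) :
    ∀ s, (mnStep α R v b)^[s] b ≤ (mnStep α R v b)^[s+1] b := by
  intro s
  obtain ⟨hbx, hFx, hx1⟩ := inner_inv hα0 hα hR0 hRcol hv1 hb0 hb1 hFb s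
  have hstep := step_lemma hα0 hα hR0 hRcol hv1 hb0 hb1 hbx hx1 hFx
  rw [Function.iterate_succ_apply']
  exact hstep.1

lemma outer_inv (hα0 : 0 < α) (hα : α < 1/2)
    (hR0 : ∀ i p, 0 ≤ R i p) (hRcol : ∀ p, ∑ i, R i p = 1) (hv1 : ∑ i, v i = 1)
    {ni : ℕ → ℕ} {x0 : Fin n → ℝ} (hFx0 : Fmap α R v x0 ≤ 0) (hx00 : 0 ≤ x0)
    (hx01 : ∑ i, x0 i ≤ 1) :
    ∀ i, 0 ≤ mnOuter α R v ni x0 i ∧ ∑ j, mnOuter α R v ni x0 i j ≤ 1 ∧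
      Fmap α R v (mnOuter α R v ni x0 i) ≤ 0 := by
  intro i
  induction i with
  | zero => exact ⟨hx00, hx01, hFx0⟩
  | succ i ih =>
    obtain ⟨hb0, hb1, hFb⟩ := ih
    obtain ⟨hble, hF, hs⟩ := inner_inv hα0 hα hR0 hRcol hv1 hb0 hb1 hFb (ni i)
    have hO : mnOuter α R v ni x0 (i+1)
        = (mnStep α R v (mnOuter α R v ni x0 i))^[ni i] (mnOuter α R v ni x0 i) := rfl
    rw [hO]
    exact ⟨le_trans hb0 hble, hs, hF⟩

end Main

theorem stmt13 {n : ℕ} (hn : 1 ≤ n) (α : ℝ) (hα0 : 0 < α) (hα : α < 1 / 2)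
    (R : Matrix (Fin n) (Fin n × Fin n) ℝ) (hR0 : ∀ i p, 0 ≤ R i p)
    (hRcol : ∀ p, ∑ i, R i p = 1)
    (v : Fin n → ℝ) (hv0 : 0 ≤ v) (hv1 : ∑ i, v i = 1)
    (ni : ℕ → ℕ) (hni : ∀ i, 1 ≤ ni i)
    (x0 : Fin n → ℝ) (hFx0 : Fmap α R v x0 ≤ 0) (hx00 : 0 ≤ x0)
    (hx01 : ∑ i, x0 i ≤ 1) :
    (∀ i, IsUnit (Fprime α R (mnOuter α R v ni x0 i))) ∧
    (∀ i s, s ≤ ni i →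
      Fmap α R v (mnIter α R v ni x0 i s) ≤ 0 ∧
      0 ≤ mnIter α R v ni x0 i s ∧
      ∑ j, mnIter α R v ni x0 i s j ≤ 1) ∧
    (∀ i s, 1 ≤ s → s ≤ ni i →
      mnIter α R v ni x0 i (s - 1) ≤ mnIter α R v ni x0 i s) ∧
    (∀ k, mnOuter α R v ni x0 k ≤ mnOuter α R v ni x0 (k + 1)) := by
  have houter := outer_inv hα0 hα hR0 hRcol hv1 hFx0 hx00 hx01 (ni := ni)
  refine ⟨?_, ?_, ?_, ?_⟩
  · intro i
    obtain ⟨hb0, hb1, _⟩ := houter i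
    exact Fprime_isUnit hα0 hα hR0 hRcol hb0 hb1
  · intro i s _
    obtain ⟨hb0, hb1, hFb⟩ := houter i
    obtain ⟨hble, hF, hs⟩ := inner_inv hα0 hα hR0 hRcol hv1 hb0 hb1 hFb s
    exact ⟨hF, le_trans hb0 hble, hs⟩
  · intro i s hs1 _
    obtain ⟨hb0, hb1, hFb⟩ := houter i
    have h := inner_mono hα0 hα hR0 hRcol hv1 hb0 hb1 hFb (s - 1)
    have hss : s - 1 + 1 = s := Nat.succ_pred_eq_of_pos hs1
    rw [hss] at h
    exact h
  · intro k
    obtain ⟨hb0, hb1, hFb⟩ := houter k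
    exact (inner_inv hα0 hα hR0 hRcol hv1 hb0 hb1 hFb (ni k)).1
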